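/- Let T : 2^V → ℝ be orthogonal to [∅] and to every tripartite function T_{σ,τ,υ} for all pairwise disjoint nonempty σ, τ, υ. Then the Möbius coefficients T̃(η) = Σ_{τ ⊆ η} (-1)^{|η|−|τ|} T(τ) vanish for η = ∅ and for all η with |η| ≥ 3. -/

import Mathlib

open Finset

/-- Indicator function of the subset `σ` on the Boolean cube. -/
def indFn {V : Type*} [DecidableEq V] (σ : Finset V) : Finset V → ℝ :=
  fun τ => if τ = σ then 1 else 0

/-- The tripartite combination `T_{σ,τ,υ}`. -/
def tripFn {V : Type*} [DecidableEq V] (A B C : Finset V) : Finset V → ℝ :=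
  indFn A + indFn B + indFn C - indFn (A ∪ B) - indFn (A ∪ C) - indFn (B ∪ C)
    + indFn (A ∪ B ∪ C)

/-- Möbius coefficient `T̃(η) = Σ_{τ ⊆ η} (-1)^{|η|-|τ|} T(τ)`. -/
def moebiusCoeff {V : Type*} [DecidableEq V] (T : Finset V → ℝ) (η : Finset V) : ℝ :=
  ∑ τ ∈ η.powerset, (-1 : ℝ) ^ (η.card - τ.card) * T τ

lemma sum_mul_indFn {V : Type*} [Fintype V] [DecidableEq V] (T : Finset V → ℝ)
    (S : Finset V) : ∑ α : Finset V, T α * indFn S α = T S := by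
  simp [indFn, mul_ite]

lemma union_singleton' {V : Type*} [DecidableEq V] (A : Finset V) (a : V) :
    A ∪ {a} = insert a A := by
  rw [Finset.union_comm]; exact (Finset.insert_eq a A).symm

lemma moebiusCoeff_insert {V : Type*} [DecidableEq V] (T : Finset V → ℝ)
    (x : V) (s : Finset V) (hx : x ∉ s) :
    moebiusCoeff T (insert x s) =
      moebiusCoeff (fun τ => T (insert x τ) - T τ) s := by
  unfold moebiusCoeff
  rw [Finset.sum_powerset_insert hx]
  rw [← Finset.sum_add_distrib]
  apply Finset.sum_congr rfl
  intro t ht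
  rw [Finset.mem_powerset] at ht
  have hxt : x ∉ t := fun h => hx (ht h)
  have hc : t.card ≤ s.card := Finset.card_le_card ht
  rw [Finset.card_insert_of_notMem hx, Finset.card_insert_of_notMem hxt]
  have h1 : s.card + 1 - t.card = (s.card - t.card) + 1 := by omega
  have h2 : s.card + 1 - (t.card + 1) = s.card - t.card := by omega
  rw [h1, h2, pow_succ]
  ring

lemma key_diff {V : Type*} [DecidableEq V] (T : Finset V → ℝ)
    (h0 : T ∅ = 0)
    (ht : ∀ A B C : Finset V, A.Nonempty → B.Nonempty → C.Nonempty →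
      Disjoint A B → Disjoint A C → Disjoint B C →
      T A + T B + T C - T (A ∪ B) - T (A ∪ C) - T (B ∪ C) + T (A ∪ B ∪ C) = 0)
    (x y z : V) (hxy : x ≠ y) (hxz : x ≠ z) (hyz : y ≠ z)
    (τ : Finset V) (hx : x ∉ τ) (hy : y ∉ τ) (hz : z ∉ τ) :
    T (insert z (insert y (insert x τ))) - T (insert y (insert x τ))
      - T (insert z (insert x τ)) + T (insert x τ)
      - T (insert z (insert y τ)) + T (insert y τ) + T (insert z τ) - T τ = 0 := by
  rcases Finset.eq_empty_or_nonempty τ with rfl | hne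
  · have h := ht {x} {y} {z} (Finset.singleton_nonempty x) (Finset.singleton_nonempty y)
      (Finset.singleton_nonempty z)
      (by simp [Finset.disjoint_singleton_right]; exact hxy)
      (by simp [Finset.disjoint_singleton_right]; exact hxz)
      (by simp [Finset.disjoint_singleton_right]; exact hyz)
    simp only [union_singleton', insert_empty_eq] at h ⊢
    linarith
  · have hdA : Disjoint (insert x τ) {y} := by
      simp [Finset.disjoint_singleton_right, Finset.mem_insert]
      exact ⟨Ne.symm hxy, hy⟩
    have hdA' : Disjoint (insert x τ) {z} := by
      simp [Finset.disjoint_singleton_right, Finset.mem_insert]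
      exact ⟨Ne.symm hxz, hz⟩
    have hdBC : Disjoint ({y} : Finset V) {z} := by
      simp [Finset.disjoint_singleton_right]; exact hyz
    have h1 := ht (insert x τ) {y} {z} (Finset.insert_nonempty x τ)
      (Finset.singleton_nonempty y) (Finset.singleton_nonempty z) hdA hdA' hdBC
    have h2 := ht τ {y} {z} hne (Finset.singleton_nonempty y) (Finset.singleton_nonempty z)
      (by simp [Finset.disjoint_singleton_right, hy])
      (by simp [Finset.disjoint_singleton_right, hz]) hdBC
    simp only [union_singleton'] at h1 h2
    linarith
  
theorem stmt_14 {V : Type*} [Fintype V] [DecidableEq V] (T : Finset V → ℝ)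
    (h0 : ∑ α : Finset V, T α * indFn ∅ α = 0)
    (htrip : ∀ σ τ υ : Finset V, σ.Nonempty → τ.Nonempty → υ.Nonempty →
      Disjoint σ τ → Disjoint σ υ → Disjoint τ υ →
      ∑ α : Finset V, T α * tripFn σ τ υ α = 0) :
    moebiusCoeff T ∅ = 0 ∧ ∀ η : Finset V, 3 ≤ η.card → moebiusCoeff T η = 0 := by
  have hT0 : T ∅ = 0 := by rw [← sum_mul_indFn T ∅]; exact h0
  have ht : ∀ A B C : Finset V, A.Nonempty → B.Nonempty → C.Nonempty →
      Disjoint A B → Disjoint A C → Disjoint B C →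
      T A + T B + T C - T (A ∪ B) - T (A ∪ C) - T (B ∪ C) + T (A ∪ B ∪ C) = 0 := by
    intro A B C hA hB hC hAB hAC hBC
    have := htrip A B C hA hB hC hAB hAC hBC
    simp only [tripFn, Pi.add_apply, Pi.sub_apply, mul_add, mul_sub,
      Finset.sum_add_distrib, Finset.sum_sub_distrib, sum_mul_indFn] at this
    linarith
  constructor
  · simp [moebiusCoeff, hT0]
  · intro η hcard
    obtain ⟨x, hxη⟩ := Finset.card_pos.mp (show 0 < η.card by omega)
    have hc1 : 2 ≤ (η.erase x).card := by
      rw [Finset.card_erase_of_mem hxη]; omega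
    obtain ⟨y, hyη⟩ := Finset.card_pos.mp (show 0 < (η.erase x).card by omega)
    have hc2 : 1 ≤ ((η.erase x).erase y).card := by
      rw [Finset.card_erase_of_mem hyη]; omega
    obtain ⟨z, hzη⟩ := Finset.card_pos.mp (show 0 < ((η.erase x).erase y).card by omega)
    set s := (((η.erase x).erase y).erase z) with hs
    have hyx : y ≠ x := Finset.ne_of_mem_erase hyη
    have hzy : z ≠ y := Finset.ne_of_mem_erase hzη
    have hzx : z ≠ x := Finset.ne_of_mem_erase (Finset.mem_of_mem_erase hzη)
    have hzs : z ∉ s := Finset.notMem_erase z _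
    have hys : y ∉ s := fun h => (Finset.notMem_erase y _) (Finset.mem_of_mem_erase h)
    have hxs : x ∉ s := fun h => (Finset.notMem_erase x _)
      (Finset.mem_of_mem_erase (Finset.mem_of_mem_erase h))
    have hzins : z ∉ insert x s := by simp [hzx, hzs]
    have hyins : y ∉ insert z (insert x s) := by
      simp [Finset.mem_insert]
      exact ⟨Ne.symm hzy, hyx, hys⟩
    have hyη' : y ∈ η := Finset.mem_of_mem_erase hyη
    have hzη' : z ∈ η := Finset.mem_of_mem_erase (Finset.mem_of_mem_erase hzη)
    have hη : η = insert y (insert z (insert x s)) := by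
      rw [hs]; ext a
      simp only [Finset.mem_insert, Finset.mem_erase]
      constructor
      · intro ha
        by_cases h1 : a = y; · tauto
        by_cases h2 : a = z; · tauto
        by_cases h3 : a = x; · tauto
        tauto
      · rintro (rfl | rfl | rfl | ⟨-, -, -, h⟩) <;> assumption
    rw [hη, moebiusCoeff_insert _ y _ hyins, moebiusCoeff_insert _ z _ hzins,
      moebiusCoeff_insert _ x _ hxs]
    unfold moebiusCoeff
    apply Finset.sum_eq_zero
    intro t htmem
    rw [Finset.mem_powerset] at htmem
    have hxt : x ∉ t := fun h => hxs (htmem h)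
    have hyt : y ∉ t := fun h => hys (htmem h)
    have hzt : z ∉ t := fun h => hzs (htmem h)
    have hkey := key_diff T hT0 ht x z y (Ne.symm hzx) (Ne.symm hyx) hzy t hxt hzt hyt
    linear_combination ((-1 : ℝ) ^ (s.card - t.card)) * hkey
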